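/- With the random collision mechanism ẽ = e + η, E[η]=0, E[η²]=β², the choice β² = 1 - e² implies E[|v'|² + |w'|²] = |v|² + |w|² for all v, w ∈ ℝ³ and all σ ∈ S² (the collision is conservative in the mean). -/

import Mathlib

open MeasureTheory

open scoped RealInnerProductSpace

/-- with variance β² = 1 - e², the random collision is
conservative in the mean. -/
theorem conservative_in_the_mean
    {Ω : Type*} [MeasurableSpace Ω] (μ : Measure Ω) [IsProbabilityMeasure μ]
    (e β : ℝ) (he0 : 0 ≤ e) (he1 : e ≤ 1)
    (η : Ω → ℝ) (hmeas : Measurable η)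
    (hint : Integrable η μ) (hint2 : Integrable (fun ω => (η ω) ^ 2) μ)
    (hmean : ∫ ω, η ω ∂μ = 0) (hvar : ∫ ω, (η ω) ^ 2 ∂μ = β ^ 2)
    (hcons : β ^ 2 = 1 - e ^ 2) :
    ∀ v w σ : EuclideanSpace ℝ (Fin 3), ‖σ‖ = 1 →
      ∫ ω, (‖(1 / 2 : ℝ) • (v + w) + ((1 - (e + η ω)) / 4) • (v - w)
              + (((1 + (e + η ω)) / 4) * ‖v - w‖) • σ‖ ^ 2
            + ‖(1 / 2 : ℝ) • (v + w) - ((1 - (e + η ω)) / 4) • (v - w)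
              - (((1 + (e + η ω)) / 4) * ‖v - w‖) • σ‖ ^ 2) ∂μ
        = ‖v‖ ^ 2 + ‖w‖ ^ 2 := by
  intro v w σ hσ
  set r : ℝ := ‖v - w‖ with hr
  set K : ℝ := ⟪v - w, σ⟫ with hK
  set C0 : ℝ := ‖v + w‖ ^ 2 / 2 + r ^ 2 / 4 + r * K / 4 with hC0
  set C2 : ℝ := (r ^ 2 - r * K) / 4 with hC2
  have key : ∀ t : ℝ,
      ‖(1 / 2 : ℝ) • (v + w) + ((1 - t) / 4) • (v - w)
          + (((1 + t) / 4) * r) • σ‖ ^ 2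
        + ‖(1 / 2 : ℝ) • (v + w) - ((1 - t) / 4) • (v - w)
          - (((1 + t) / 4) * r) • σ‖ ^ 2
        = C0 + C2 * t ^ 2 := by
    intro t
    set a : EuclideanSpace ℝ (Fin 3) := (1 / 2 : ℝ) • (v + w) with ha
    set b : EuclideanSpace ℝ (Fin 3) :=
      ((1 - t) / 4) • (v - w) + (((1 + t) / 4) * r) • σ with hb
    have e1 : (1 / 2 : ℝ) • (v + w) + ((1 - t) / 4) • (v - w)
        + (((1 + t) / 4) * r) • σ = a + b := by rw [ha, hb]; abel
    have e2 : (1 / 2 : ℝ) • (v + w) - ((1 - t) / 4) • (v - w)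
        - (((1 + t) / 4) * r) • σ = a - b := by rw [ha, hb]; abel
    rw [e1, e2, norm_add_sq_real, norm_sub_sq_real]
    have hna : ‖a‖ ^ 2 = (1 / 4) * ‖v + w‖ ^ 2 := by
      rw [ha, norm_smul]
      simp [Real.norm_eq_abs]
      ring
    have hnb : ‖b‖ ^ 2 = ((1 - t) / 4) ^ 2 * r ^ 2
        + 2 * (((1 - t) / 4) * (((1 + t) / 4) * r)) * K
        + (((1 + t) / 4) * r) ^ 2 := by
      rw [hb, norm_add_sq_real, norm_smul, norm_smul, real_inner_smul_left,
        real_inner_smul_right, hσ]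
      simp only [Real.norm_eq_abs, mul_one]
      rw [mul_pow, mul_pow, sq_abs, sq_abs]
      rw [← hr, ← hK]
      ring_nf
    rw [hna, hnb, hC0, hC2]
    ring
  have hptw : ∀ ω : Ω,
      (‖(1 / 2 : ℝ) • (v + w) + ((1 - (e + η ω)) / 4) • (v - w)
          + (((1 + (e + η ω)) / 4) * ‖v - w‖) • σ‖ ^ 2
        + ‖(1 / 2 : ℝ) • (v + w) - ((1 - (e + η ω)) / 4) • (v - w)
          - (((1 + (e + η ω)) / 4) * ‖v - w‖) • σ‖ ^ 2)
      = (C0 + C2 * e ^ 2) + (2 * e * C2) * η ω + C2 * (η ω) ^ 2 := by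
    intro ω
    rw [← hr, key (e + η ω)]
    ring
  rw [integral_congr_ae (Filter.Eventually.of_forall hptw)]
  have i1 : Integrable (fun ω => (C0 + C2 * e ^ 2) + 2 * e * C2 * η ω) μ :=
    (integrable_const _).add (hint.const_mul _)
  have i2 : Integrable (fun ω => C2 * (η ω) ^ 2) μ := hint2.const_mul _
  rw [integral_add i1 i2,
    integral_add (integrable_const _) (hint.const_mul _),
    integral_const_mul, integral_const_mul, hmean, hvar, hcons,
    integral_const]
  simp only [measure_univ, probReal_univ, ENNReal.toReal_one, smul_eq_mul, one_mul, mul_zero,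
    add_zero]
  have hpar : ‖v + w‖ ^ 2 + ‖v - w‖ ^ 2 = 2 * (‖v‖ ^ 2 + ‖w‖ ^ 2) := by
    rw [norm_add_sq_real, norm_sub_sq_real]; ring
  rw [← hr] at hpar
  rw [hC0, hC2]
  nlinarith [hpar]
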